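/- For all natural numbers k ≥ 1: ∑_{λ=0}^{k} ((λ+1)^2/(k+1)) · binomial(2k+2, k-λ) = 2^(2k); equivalently, ∑_{λ=0}^{k} (λ+1)^2 · binomial(2k+2, k-λ) = (k+1)·4^k. -/

import Mathlib

open Finset

/-- Full-range moment identity: ∑_{j=0}^n (n-2j)^2 C(n,j) = n·2^n. -/
lemma full_sum_sq (n : ℕ) :
    ∑ j ∈ range (n + 1), ((n : ℤ) - 2 * j) ^ 2 * (n.choose j) = (n : ℤ) * 2 ^ n := by
  induction n with
  | zero => simp
  | succ n ih =>
    have hA : ∑ j ∈ range (n + 2), (((n : ℤ) + 1) - 2 * j) ^ 2 * ((n + 1).choose j)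
        = ∑ j ∈ range (n + 1),
            ((((n : ℤ) - 1) - 2 * j) ^ 2 * (n.choose j)
              + (((n : ℤ) + 1) - 2 * (j + 1)) ^ 2 * (n.choose (j + 1)))
          + ((n : ℤ) + 1) ^ 2 := by
      push_cast
      rw [Finset.sum_range_succ' _ (n + 1)]
      simp only [Nat.choose_succ_succ, Nat.cast_add, Nat.cast_zero, Nat.choose_zero_right,
        Nat.cast_one]
      congr 1
      · apply Finset.sum_congr rfl
        intro j _
        push_cast
        ring
      · push_cast; ring
    have hB : ∑ j ∈ range (n + 1), (((n : ℤ) + 1) - 2 * (j + 1)) ^ 2 * (n.choose (j + 1))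
        = ∑ j ∈ range (n + 1), (((n : ℤ) + 1) - 2 * j) ^ 2 * (n.choose j)
          - ((n : ℤ) + 1) ^ 2 := by
      have h := Finset.sum_range_succ' (fun j => (((n : ℤ) + 1) - 2 * j) ^ 2 * (n.choose j)) (n + 1)
      have hzero : (((n : ℤ) + 1) - 2 * (n + 1)) ^ 2 * (n.choose (n + 1)) = 0 := by
        simp [Nat.choose_succ_self]
      rw [Finset.sum_range_succ] at h
      simp only [hzero, add_zero, Nat.cast_zero, mul_zero, sub_zero, Nat.choose_zero_right,
        Nat.cast_one, mul_one] at h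
      push_cast at h ⊢
      linarith [h]
    push_cast
    rw [hA, Finset.sum_add_distrib, hB]
    have hcomb : ∑ j ∈ range (n + 1), (((n : ℤ) - 1) - 2 * j) ^ 2 * (n.choose j)
        + ∑ j ∈ range (n + 1), (((n : ℤ) + 1) - 2 * j) ^ 2 * (n.choose j)
        = 2 * (∑ j ∈ range (n + 1), ((n : ℤ) - 2 * j) ^ 2 * (n.choose j))
          + 2 * ∑ j ∈ range (n + 1), ((n.choose j : ℤ)) := by
      rw [Finset.mul_sum, Finset.mul_sum, ← Finset.sum_add_distrib, ← Finset.sum_add_distrib]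
      apply Finset.sum_congr rfl
      intro j _
      ring
    have hch : ∑ j ∈ range (n + 1), ((n.choose j : ℤ)) = 2 ^ n := by
      have := Nat.sum_range_choose n
      exact_mod_cast congrArg (Nat.cast : ℕ → ℤ) this
    have h2 : (2 : ℤ) ^ (n + 1) = 2 ^ n * 2 := pow_succ 2 n
    have h3 : ((n : ℤ) + 1) * 2 ^ (n + 1) = 2 * ((n : ℤ) * 2 ^ n) + 2 * 2 ^ n := by
      rw [h2]; ring
    linarith [hcomb, ih, hch]

theorem odd_grassmannian_G2k1_3 (k : ℕ) (hk : 1 ≤ k) :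
    ∑ l ∈ Finset.range (k + 1), (l + 1) ^ 2 * Nat.choose (2 * k + 2) (k - l) =
      (k + 1) * 4 ^ k := by
  set n := 2 * k + 2 with hn
  set f : ℕ → ℤ := fun j => ((n : ℤ) - 2 * j) ^ 2 * (n.choose j) with hf
  -- reflect the original sum
  have hreflect : ∑ l ∈ range (k + 1), (l + 1) ^ 2 * Nat.choose n (k - l)
      = ∑ j ∈ range (k + 1), (k + 1 - j) ^ 2 * Nat.choose n j := by
    rw [← Finset.sum_range_reflect (fun l => (l + 1) ^ 2 * Nat.choose n (k - l)) (k + 1)]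
    apply Finset.sum_congr rfl
    intro j hj
    simp only [Finset.mem_range] at hj
    have h1 : k + 1 - 1 - j = k - j := by omega
    have h2 : k - (k - j) = j := by omega
    have h3 : k - j + 1 = k + 1 - j := by omega
    rw [h1, h2, h3]
  -- half sum S in ℤ
  set S : ℤ := ∑ j ∈ range (k + 1), f j with hS
  have hS4 : S = 4 * ∑ j ∈ range (k + 1), ((k + 1 - j) ^ 2 * Nat.choose n j : ℕ) := by
    rw [Nat.cast_sum, Finset.mul_sum]
    apply Finset.sum_congr rfl
    intro j hj
    simp only [Finset.mem_range] at hj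
    have hjk : j ≤ k := by omega
    have hcast : ((k + 1 - j : ℕ) : ℤ) = (k : ℤ) + 1 - j := by
      push_cast [Nat.cast_sub (by omega : j ≤ k + 1)]
      ring
    simp only [hf]
    push_cast [hcast]
    rw [hn]; push_cast
    ring
  -- the full sum splits as 2 * S
  have hfull : ∑ j ∈ range (n + 1), f j = 2 * S := by
    have hsplit : range (n + 1) = range (k + 1) ∪ Finset.Ico (k + 1) (n + 1) := by
      rw [Finset.range_eq_Ico, Finset.range_eq_Ico, Finset.Ico_union_Ico_eq_Ico] <;> omega
    rw [hsplit, Finset.sum_union (by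
      rw [Finset.range_eq_Ico]
      exact Finset.Ico_disjoint_Ico_consecutive 0 (k+1) (n+1))]
    rw [Finset.sum_eq_sum_Ico_succ_bot (by omega : k + 1 < n + 1)]
    have hfk1 : f (k + 1) = 0 := by
      simp only [hf]
      have : ((n : ℤ) - 2 * (k + 1 : ℕ)) = 0 := by
        have : (n : ℤ) = 2 * k + 2 := by exact_mod_cast congrArg (Nat.cast : ℕ → ℤ) hn
        rw [this]; push_cast; ring
      rw [this]; ring
    have htail : ∑ j ∈ Finset.Ico (k + 2) (n + 1), f j = S := by
      rw [hS]
      apply Finset.sum_nbij' (fun j => n - j) (fun j => n - j)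
      · intro a ha; simp only [Finset.mem_Ico] at ha; simp only [Finset.mem_range]; omega
      · intro a ha; simp only [Finset.mem_range] at ha; simp only [Finset.mem_Ico]; omega
      · intro a ha; simp only [Finset.mem_Ico] at ha; omega
      · intro a ha; simp only [Finset.mem_range] at ha; omega
      · intro a ha
        simp only [Finset.mem_Ico] at ha
        have han : a ≤ n := by omega
        simp only [hf]
        rw [Nat.choose_symm han]
        have hcast : ((n - a : ℕ) : ℤ) = (n : ℤ) - a := by
          push_cast [Nat.cast_sub han]; ring
        rw [hcast]
        ring
    rw [hfk1, htail]
    ring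
  have hFS : (n : ℤ) * 2 ^ n = 2 * S := by
    rw [← hfull]
    simp only [hf]
    exact (full_sum_sq n).symm
  have hval : S = 4 * ((k + 1 : ℤ) * 4 ^ k) := by
    have hn2 : (n : ℤ) = 2 * k + 2 := by exact_mod_cast congrArg (Nat.cast : ℕ → ℤ) hn
    have h2n : (2 : ℤ) ^ n = 4 * 4 ^ k := by
      rw [hn]
      rw [pow_add, pow_mul]
      norm_num
      ring
    rw [hn2, h2n] at hFS
    linarith
  rw [hreflect]
  have : (4 : ℤ) * ∑ j ∈ range (k + 1), ((k + 1 - j) ^ 2 * Nat.choose n j : ℕ)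
      = 4 * ((k + 1 : ℤ) * 4 ^ k) := by rw [← hS4, hval]
  have hfinal : (∑ j ∈ range (k + 1), ((k + 1 - j) ^ 2 * Nat.choose n j : ℕ) : ℤ)
      = ((k + 1) * 4 ^ k : ℕ) := by push_cast at this ⊢; linarith
  exact_mod_cast hfinal
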